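/- Fix a prime p. Let α ∈ Q̄_p (the algebraic closure of ℚ_p with unique valuation v_p extending the p-adic valuation) be unramified over ℚ_p, let q_α ∈ ℚ_p[X] be its minimal polynomial, and let δ ∈ ℚ. Then v_{p,α,δ}(q_α) = k·δ + γ, where γ ∈ ℤ and k is the number of conjugates α′ of α over ℚ_p satisfying v_p(α − α′) ≥ δ. -/

import Mathlib

open scoped NNReal

/-- The monomial (Gauss-type) value attached to a pair `(α, d)`: for
`f = Σᵢ aᵢ (X - α)^i` this is `supᵢ v(aᵢ) * d^i`.  Multiplicative notation: `d = p^{-δ}`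
corresponds to the additive rational radius `δ`, and additive `min` becomes `sup`. -/
noncomputable def monVal {L Γ₀ : Type*} [Field L] [LinearOrderedCommGroupWithZero Γ₀]
    (u : Valuation L Γ₀) (α : L) (d : Γ₀) (f : Polynomial L) : Γ₀ :=
  letI : Bot Γ₀ := ⟨0⟩
  letI : OrderBot Γ₀ := { bot_le := fun _ => zero_le' }
  (f.comp (Polynomial.X + Polynomial.C α)).support.sup
    fun i => u ((f.comp (Polynomial.X + Polynomial.C α)).coeff i) * d ^ i

namespace Stmt15Aux
open Multiset Polynomial


lemma prod_le_pow (d : ℝ≥0) (u : Multiset ℝ≥0) (h : ∀ x ∈ u, x ≤ d) :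
    u.prod ≤ d ^ Multiset.card u := by
  induction u using Multiset.induction with
  | empty => simp
  | cons a t ih =>
    simp only [Multiset.prod_cons, Multiset.card_cons, pow_succ']
    exact mul_le_mul' (h a (mem_cons_self a t)) (ih fun x hx => h x (mem_cons_of_mem hx))

lemma pow_le_prod (d : ℝ≥0) (u : Multiset ℝ≥0) (h : ∀ x ∈ u, d ≤ x) :
    d ^ Multiset.card u ≤ u.prod := by
  induction u using Multiset.induction with
  | empty => simp
  | cons a t ih =>
    simp only [Multiset.prod_cons, Multiset.card_cons, pow_succ']
    exact mul_le_mul' (h a (mem_cons_self a t)) (ih fun x hx => h x (mem_cons_of_mem hx))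

lemma pow_lt_prod {d : ℝ≥0} (hd : 0 < d) (u : Multiset ℝ≥0) (h : ∀ x ∈ u, d < x)
    (hu : u ≠ 0) : d ^ Multiset.card u < u.prod := by
  induction u using Multiset.induction with
  | empty => simp at hu
  | cons a t ih =>
    rcases eq_or_ne t 0 with rfl | ht
    · simpa using h a (mem_cons_self a 0)
    · simp only [Multiset.prod_cons, Multiset.card_cons, pow_succ']
      exact mul_lt_mul'' (h a (mem_cons_self a t))
        (ih (fun x hx => h x (mem_cons_of_mem hx)) ht) (by positivity) (by positivity)

lemma val_sum_le {L : Type*} [Field L] (v : Valuation L ℝ≥0) {B : ℝ≥0}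
    (u : Multiset L) (h : ∀ x ∈ u, v x ≤ B) : v u.sum ≤ B := by
  induction u using Multiset.induction with
  | empty => simp
  | cons a t ih =>
    rw [Multiset.sum_cons]
    exact le_trans (v.map_add _ _)
      (max_le (h a (mem_cons_self a t)) (ih fun x hx => h x (mem_cons_of_mem hx)))

lemma val_sum_lt {L : Type*} [Field L] (v : Valuation L ℝ≥0) {B : ℝ≥0} (hB : 0 < B)
    (u : Multiset L) (h : ∀ x ∈ u, v x < B) : v u.sum < B := by
  induction u using Multiset.induction with
  | empty => simpa using hB
  | cons a t ih =>
    rw [Multiset.sum_cons]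
    exact lt_of_le_of_lt (v.map_add _ _)
      (max_lt (h a (mem_cons_self a t)) (ih fun x hx => h x (mem_cons_of_mem hx)))



section Core
variable {L : Type*} [Field L] (v : Valuation L ℝ≥0) (d : ℝ≥0) (s : Multiset L)

noncomputable def Pbig : ℝ≥0 := ((s.filter fun c => ¬ v c ≤ d).map v).prod

lemma P_pos (hd : 0 < d) : 0 < Pbig v d s := by
  have h := pow_le_prod d ((s.filter fun c => ¬ v c ≤ d).map v) ?_
  · exact lt_of_lt_of_le (pow_pos hd _) h
  · intro x hx
    obtain ⟨c, hc, rfl⟩ := Multiset.mem_map.1 hx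
    exact (lt_of_not_ge (Multiset.mem_filter.1 hc).2).le

lemma card_split :
    Multiset.card (s.filter fun c => v c ≤ d)
      + Multiset.card (s.filter fun c => ¬ v c ≤ d) = Multiset.card s := by
  rw [← Multiset.card_add, Multiset.filter_add_not]

/-- bound for a sub-multiset -/
lemma sub_bound (t : Multiset L) (ht : t ≤ s) :
    (t.map v).prod * d ^ (Multiset.card s - Multiset.card t)
      ≤ d ^ (Multiset.card (s.filter fun c => v c ≤ d)) * Pbig v d s := by
  classical
  set k := Multiset.card (s.filter fun c => v c ≤ d) with hk
  set sb := s.filter (fun c => ¬ v c ≤ d) with hsb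
  set tb := t.filter (fun c => ¬ v c ≤ d) with htb_def
  set ts := t.filter (fun c => v c ≤ d) with hts_def
  have htsum : ts + tb = t := Multiset.filter_add_not _ t
  have hcard : Multiset.card ts + Multiset.card tb = Multiset.card t := by
    rw [← Multiset.card_add, htsum]
  have htb_le : tb ≤ sb := Multiset.filter_le_filter _ ht
  have htbcard : Multiset.card tb ≤ Multiset.card sb := Multiset.card_le_card htb_le
  have htcard : Multiset.card t ≤ Multiset.card s := Multiset.card_le_card ht
  have hks : k + Multiset.card sb = Multiset.card s := card_split v d s
  have hsplitP : Pbig v d s = (tb.map v).prod * ((sb - tb).map v).prod := by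
    rw [Pbig, ← hsb]
    conv_lhs => rw [← tsub_add_cancel_of_le htb_le, Multiset.map_add, Multiset.prod_add]
    ring
  have h2 : (ts.map v).prod ≤ d ^ Multiset.card ts := by
    have := prod_le_pow d (ts.map v) ?_
    · simpa using this
    · rintro x hx
      obtain ⟨c, hc, rfl⟩ := Multiset.mem_map.1 hx
      exact (Multiset.mem_filter.1 hc).2
  have h3 : d ^ (Multiset.card sb - Multiset.card tb) ≤ ((sb - tb).map v).prod := by
    have := pow_le_prod d ((sb - tb).map v) ?_
    · simpa [Multiset.card_sub htb_le] using this
    · intro x hx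
      obtain ⟨c, hc, rfl⟩ := Multiset.mem_map.1 hx
      exact (lt_of_not_ge
        (Multiset.mem_filter.1 (Multiset.mem_of_le (tsub_le_self) hc)).2).le
  calc (t.map v).prod * d ^ (Multiset.card s - Multiset.card t)
      = ((ts.map v).prod * (tb.map v).prod) * d ^ (Multiset.card s - Multiset.card t) := by
        rw [show (t.map v).prod = (ts.map v).prod * (tb.map v).prod by
          conv_lhs => rw [← htsum, Multiset.map_add, Multiset.prod_add]]
    _ ≤ (d ^ Multiset.card ts * (tb.map v).prod) * d ^ (Multiset.card s - Multiset.card t) :=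
        mul_le_mul_left (mul_le_mul_left h2 _) _
    _ = (tb.map v).prod * d ^ (Multiset.card ts + (Multiset.card s - Multiset.card t)) := by
        rw [pow_add]; ring
    _ = (tb.map v).prod * d ^ ((Multiset.card sb - Multiset.card tb) + k) := by
        congr 2
        omega
    _ = ((tb.map v).prod * d ^ (Multiset.card sb - Multiset.card tb)) * d ^ k := by
        rw [pow_add]; ring
    _ ≤ ((tb.map v).prod * ((sb - tb).map v).prod) * d ^ k :=
        mul_le_mul_left (mul_le_mul_right h3 _) _
    _ = d ^ k * Pbig v d s := by rw [hsplitP]; ring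

/-- strict bound for competing subsets of the same size -/
lemma sub_strict (hd : 0 < d) (t : Multiset L) (ht : t ≤ s)
    (hc : Multiset.card t = Multiset.card (s.filter fun c => ¬ v c ≤ d))
    (hne : t ≠ s.filter fun c => ¬ v c ≤ d) : v t.prod < Pbig v d s := by
  classical
  set sb := s.filter (fun c => ¬ v c ≤ d) with hsb
  set tb := t.filter (fun c => ¬ v c ≤ d) with htb_def
  set ts := t.filter (fun c => v c ≤ d) with hts_def
  have htsum : ts + tb = t := Multiset.filter_add_not _ t
  have hcard : Multiset.card ts + Multiset.card tb = Multiset.card t := by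
    rw [← Multiset.card_add, htsum]
  have htb_le : tb ≤ sb := Multiset.filter_le_filter _ ht
  have htbcard : Multiset.card tb ≤ Multiset.card sb := Multiset.card_le_card htb_le
  have hts0 : ts ≠ 0 := by
    intro h0
    apply hne
    have h0' : Multiset.card ts = 0 := by rw [h0]; rfl
    have ht' : t = tb := by rw [← htsum, h0, zero_add]
    rw [ht']
    exact Multiset.eq_of_le_of_card_le htb_le (by omega)
  have htscard : 0 < Multiset.card ts := Multiset.card_pos.2 hts0
  have hsplitP : Pbig v d s = (tb.map v).prod * ((sb - tb).map v).prod := by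
    rw [Pbig, ← hsb]
    conv_lhs => rw [← tsub_add_cancel_of_le htb_le, Multiset.map_add, Multiset.prod_add]
    ring
  have hcsub : Multiset.card (sb - tb) = Multiset.card ts := by
    rw [Multiset.card_sub htb_le]; omega
  have hsub0 : (sb - tb).map v ≠ 0 := by
    rw [ne_eq, Multiset.map_eq_zero, ← Multiset.card_eq_zero, hcsub]
    omega
  have h3 : d ^ Multiset.card ts < ((sb - tb).map v).prod := by
    have h := pow_lt_prod hd ((sb - tb).map v) (fun x hx => ?_) hsub0
    · have hc2 : Multiset.card ((sb - tb).map v) = Multiset.card ts := by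
        rw [Multiset.card_map, Multiset.card_sub htb_le]; omega
      rwa [hc2] at h
    · obtain ⟨c, hcm, rfl⟩ := Multiset.mem_map.1 hx
      exact lt_of_not_ge
        (Multiset.mem_filter.1 (Multiset.mem_of_le (tsub_le_self) hcm)).2
  have htb_pos : 0 < (tb.map v).prod := by
    have h := pow_le_prod d (tb.map v) ?_
    · exact lt_of_lt_of_le (pow_pos hd _) h
    · intro x hx
      obtain ⟨c, hcm, rfl⟩ := Multiset.mem_map.1 hx
      exact (lt_of_not_ge (Multiset.mem_filter.1 hcm).2).le
  have h2 : (ts.map v).prod ≤ d ^ Multiset.card ts := by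
    have := prod_le_pow d (ts.map v) ?_
    · simpa using this
    · rintro x hx
      obtain ⟨c, hcm, rfl⟩ := Multiset.mem_map.1 hx
      exact (Multiset.mem_filter.1 hcm).2
  calc v t.prod = (t.map v).prod := map_multiset_prod v t
    _ = (ts.map v).prod * (tb.map v).prod := by
        conv_lhs => rw [← htsum, Multiset.map_add, Multiset.prod_add]
    _ ≤ d ^ Multiset.card ts * (tb.map v).prod := mul_le_mul_left h2 _
    _ < ((sb - tb).map v).prod * (tb.map v).prod := mul_lt_mul_of_pos_right h3 htb_pos
    _ = Pbig v d s := by rw [hsplitP]; ring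

end Core


section Core2
variable {L : Type*} [Field L] (v : Valuation L ℝ≥0) (d : ℝ≥0) (s : Multiset L)

lemma coeff_k (hd : 0 < d) (hnd : s.Nodup) :
    v (((s.map fun c => X + C c).prod).coeff (Multiset.card (s.filter fun c => v c ≤ d)))
      = Pbig v d s := by
  classical
  set sb := s.filter (fun c => ¬ v c ≤ d) with hsb
  set k := Multiset.card (s.filter fun c => v c ≤ d) with hk
  have hk_le : k ≤ Multiset.card s := Multiset.card_le_card (Multiset.filter_le _ _)
  have hco : ((s.map fun c => X + C c).prod).coeff k = s.esymm (Multiset.card s - k) :=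
    Multiset.prod_X_add_C_coeff s hk_le
  have hks : k + Multiset.card sb = Multiset.card s := card_split v d s
  have hcs : Multiset.card s - k = Multiset.card sb := by omega
  rw [hco, hcs, Multiset.esymm]
  have hmem : sb ∈ s.powersetCard (Multiset.card sb) :=
    (Multiset.mem_powersetCard).2 ⟨Multiset.filter_le _ _, rfl⟩
  have hnd2 : (s.powersetCard (Multiset.card sb)).Nodup := hnd.powersetCard
  rw [← Multiset.cons_erase hmem, Multiset.map_cons, Multiset.sum_cons]
  have hvsb : v sb.prod = Pbig v d s := map_multiset_prod v sb
  have hrest :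
      v ((((s.powersetCard (Multiset.card sb)).erase sb).map Multiset.prod).sum)
        < v sb.prod := by
    rw [hvsb]
    apply val_sum_lt v (P_pos v d s hd)
    intro x hx
    obtain ⟨t, htm, rfl⟩ := Multiset.mem_map.1 hx
    have htm' : t ∈ s.powersetCard (Multiset.card sb) := Multiset.mem_of_mem_erase htm
    obtain ⟨hts, htc⟩ := (Multiset.mem_powersetCard).1 htm'
    have hne : t ≠ sb := by
      rintro rfl
      exact hnd2.notMem_erase htm
    exact sub_strict v d s hd t hts htc hne
  rw [Valuation.map_add_eq_of_lt_left v hrest, hvsb]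

lemma support_bound (hd : 0 < d) :
    ∀ i ∈ ((s.map fun c => X + C c).prod).support,
      v (((s.map fun c => X + C c).prod).coeff i) * d ^ i
        ≤ d ^ (Multiset.card (s.filter fun c => v c ≤ d)) * Pbig v d s := by
  classical
  intro i hi
  set k := Multiset.card (s.filter fun c => v c ≤ d) with hk
  have hdeg : ((s.map fun c => X + C c).prod).natDegree = Multiset.card s := by
    rw [Polynomial.natDegree_multiset_prod_of_monic]
    · simp [Multiset.map_map, Function.comp]
    · intro f hf
      obtain ⟨c, _, rfl⟩ := Multiset.mem_map.1 hf
      exact monic_X_add_C c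
  have hin : i ≤ Multiset.card s := hdeg ▸ Polynomial.le_natDegree_of_mem_supp i hi
  rw [Multiset.prod_X_add_C_coeff s hin, Multiset.esymm]
  have hB : v (((s.powersetCard (Multiset.card s - i)).map Multiset.prod).sum)
      ≤ (d ^ k * Pbig v d s) / d ^ i := by
    apply val_sum_le
    intro x hx
    obtain ⟨t, htm, rfl⟩ := Multiset.mem_map.1 hx
    obtain ⟨hts, htc⟩ := (Multiset.mem_powersetCard).1 htm
    rw [le_div_iff₀ (pow_pos hd i)]
    have hb := sub_bound v d s t hts
    rw [htc, show Multiset.card s - (Multiset.card s - i) = i from by omega] at hb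
    calc v t.prod * d ^ i = (t.map v).prod * d ^ i := by rw [map_multiset_prod]
      _ ≤ _ := hb
  calc v (((s.powersetCard (Multiset.card s - i)).map Multiset.prod).sum) * d ^ i
      ≤ ((d ^ k * Pbig v d s) / d ^ i) * d ^ i := mul_le_mul_left hB _
    _ = d ^ k * Pbig v d s := div_mul_cancel₀ _ (pow_ne_zero i hd.ne')

end Core2

end Stmt15Aux

open Multiset Polynomial

/-- Let `v` be the (unique) extension to `Q̄_p` of the `p`-adic
absolute value, let `α ∈ Q̄_p` be unramified over `ℚ_p` (the values of `v` on
`ℚ_p(α)ˣ` are integer powers of `p`), with minimal polynomial `q_α`, and let `δ ∈ ℚ`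
(multiplicatively: `d` with `dⁿ = p^m`).  Then `v_{p,α,δ}(q_α) = k·δ + γ` for some
`γ ∈ ℤ` (multiplicatively `monVal v α d q_α = d^k * p^γ`), where `k` is the number of
conjugates `α'` of `α` over `ℚ_p` with `v_p(α - α') ≥ δ` (multiplicatively
`v(α - α') ≤ d`). -/
theorem stmt_15 (p : ℕ) [Fact p.Prime]
    (v : Valuation (AlgebraicClosure ℚ_[p]) ℝ≥0)
    (hv : ∀ x : ℚ_[p], v (algebraMap ℚ_[p] (AlgebraicClosure ℚ_[p]) x) = ‖x‖₊)
    (α : AlgebraicClosure ℚ_[p])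
    (hur : ∀ x : AlgebraicClosure ℚ_[p],
      x ∈ IntermediateField.adjoin ℚ_[p] {α} → x ≠ 0 → ∃ m : ℤ, v x = (p : ℝ≥0) ^ m)
    (d : ℝ≥0) (hd : ∃ (m : ℤ) (n : ℕ), 0 < n ∧ d ^ n = (p : ℝ≥0) ^ m) :
    ∃ γ : ℤ,
      monVal v α d
        ((minpoly ℚ_[p] α).map (algebraMap ℚ_[p] (AlgebraicClosure ℚ_[p]))) =
      d ^ Set.ncard {β : AlgebraicClosure ℚ_[p] |
            Polynomial.aeval β (minpoly ℚ_[p] α) = 0 ∧ v (α - β) ≤ d} *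
        (p : ℝ≥0) ^ γ := by
  classical
  obtain ⟨m0, n0, hn0, hdn⟩ := hd
  have hppos : (0:ℝ≥0) < p := by exact_mod_cast (Fact.out : p.Prime).pos
  have hdpos : 0 < d := by
    refine pos_iff_ne_zero.2 fun h0 => ?_
    rw [h0, zero_pow hn0.ne'] at hdn
    exact (zpow_ne_zero m0 hppos.ne') hdn.symm
  have hint : IsIntegral ℚ_[p] α :=
    IsAlgebraic.isIntegral (Algebra.IsAlgebraic.isAlgebraic α)
  set q := minpoly ℚ_[p] α with hq
  set Q := q.map (algebraMap ℚ_[p] (AlgebraicClosure ℚ_[p])) with hQ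
  have hQm : Q.Monic := (minpoly.monic hint).map _
  have hsep : Q.Separable := ((minpoly.irreducible hint).separable).map
  have hndr : Q.roots.Nodup := Polynomial.nodup_roots hsep
  set t := Q.roots with ht
  have hQsplit : Q = (t.map fun β => X - C β).prod :=
    (IsAlgClosed.splits Q).eq_prod_roots_of_monic hQm
  set s := t.map (fun β => α - β) with hs
  have hnds : s.Nodup := hndr.map sub_right_injective
  have hcomp : Q.comp (X + C α) = (s.map fun c => X + C c).prod := by
    conv_lhs => rw [hQsplit]
    rw [Polynomial.multiset_prod_comp, Multiset.map_map, hs, Multiset.map_map]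
    congr 1
    apply Multiset.map_congr rfl
    intro β _
    simp only [Function.comp_apply, Polynomial.sub_comp, Polynomial.X_comp,
      Polynomial.C_comp, map_sub]
    ring
  set k := Multiset.card (s.filter fun c => v c ≤ d) with hk
  have hQ0 : Q ≠ 0 := hQm.ne_zero
  have hroot : ∀ β : AlgebraicClosure ℚ_[p], (Polynomial.aeval β) q = 0 ↔ β ∈ t := by
    intro β
    rw [ht, Polynomial.mem_roots hQ0, Polynomial.IsRoot.def, hQ, Polynomial.eval_map,
      ← Polynomial.aeval_def]
  have hfilt : s.filter (fun c => v c ≤ d)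
      = (t.filter fun β => v (α - β) ≤ d).map (fun β => α - β) := by
    rw [hs, Multiset.filter_map]
    rfl
  have hset : Set.ncard {β : AlgebraicClosure ℚ_[p] | (Polynomial.aeval β) q = 0 ∧ v (α - β) ≤ d} = k := by
    have heq : {β : AlgebraicClosure ℚ_[p] | (Polynomial.aeval β) q = 0 ∧ v (α - β) ≤ d}
        = ↑((⟨t.filter (fun β => v (α - β) ≤ d), hndr.filter _⟩ : Finset (AlgebraicClosure ℚ_[p]))) := by
      ext β
      simp only [Set.mem_setOf_eq, Finset.coe_mem, Finset.mem_coe, Finset.mem_mk,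
        Multiset.mem_filter, hroot β]
    rw [heq, Set.ncard_coe_finset]
    show Multiset.card (t.filter fun β => v (α - β) ≤ d) = k
    rw [hk, hfilt, Multiset.card_map]
  set r := Q.comp (X + C α) with hr
  have hPk : v (r.coeff k) = Stmt15Aux.Pbig v d s := by
    rw [hcomp]
    exact Stmt15Aux.coeff_k v d s hdpos hnds
  have hPpos := Stmt15Aux.P_pos v d s hdpos
  set E := IntermediateField.adjoin ℚ_[p] {α} with hE
  have hαE : α ∈ E := IntermediateField.mem_adjoin_simple_self ℚ_[p] α
  set r₀ := (q.map (algebraMap ℚ_[p] E)).comp (X + C (⟨α, hαE⟩ : E)) with hr₀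
  have hmap : r₀.map (algebraMap E (AlgebraicClosure ℚ_[p])) = r := by
    rw [hr₀, Polynomial.map_comp, Polynomial.map_map, ← IsScalarTower.algebraMap_eq]
    simp only [Polynomial.map_add, Polynomial.map_X, Polynomial.map_C]
    rfl
  have hmem : r.coeff k ∈ E := by
    rw [← hmap, Polynomial.coeff_map]
    exact (r₀.coeff k).2
  have hne : r.coeff k ≠ 0 := by
    intro h0
    rw [h0, v.map_zero] at hPk
    exact hPpos.ne hPk
  obtain ⟨γ, hγ⟩ := hur (r.coeff k) hmem hne
  refine ⟨γ, ?_⟩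
  rw [hset, ← hγ, hPk]
  show monVal v α d Q = d ^ k * Stmt15Aux.Pbig v d s
  have hmv : monVal v α d Q = r.support.sup
      (fun i => v (r.coeff i) * d ^ i) := rfl
  rw [hmv]
  apply le_antisymm
  · apply Finset.sup_le
    intro i hi
    rw [hcomp] at hi ⊢
    exact Stmt15Aux.support_bound v d s hdpos i hi
  · have hksupp : k ∈ (Q.comp (X + C α)).support := by
      rw [Polynomial.mem_support_iff]
      exact hne
    have hle := Finset.le_sup (f := fun i => v ((Q.comp (X + C α)).coeff i) * d ^ i) hksupp
    calc d ^ k * Stmt15Aux.Pbig v d s = v ((Q.comp (X + C α)).coeff k) * d ^ k := by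
          rw [show (Q.comp (X + C α)).coeff k = r.coeff k from rfl, hPk]; ring
      _ ≤ _ := hle
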